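/- For every integer k ≥ 1, 1 + 2·sin(π/(4k+8)) / (cos(π/(4k+8)) − sin(π/(4k+8))) < 1 + 2·sin(π/(4k+2)). -/

import Mathlib

open Real

set_option maxHeartbeats 1000000 in
lemma ub_aux (a b : ℝ) (ha0 : 0 < a) (hb0 : 0 < b) (ha12 : a ≤ π / 12)
    (hb1 : b ≤ 1) (hb6 : b ≤ π / 6) (hb2a : b ≤ 2 * a)
    (hba : b - a = 6 / π * (a * b)) :
    1 + 2 * sin a / (cos a - sin a) < 1 + 2 * sin b := by
  have hpi : (0:ℝ) < π := Real.pi_pos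
  have hpil : π < 3.15 := by linarith [Real.pi_lt_d2]
  have hpig : 3.14 < π := by linarith [Real.pi_gt_d6]
  have hsa : sin a < a := Real.sin_lt ha0
  have hsb : sin b < b := Real.sin_lt hb0
  have hsb' : b - b ^ 3 / 4 < sin b := by have := Real.sin_gt_sub_cube hb0; nlinarith [pow_pos hb0 3]
  have hca : 1 - a ^ 2 / 2 ≤ cos a := Real.one_sub_sq_div_two_le_cos
  have hsa0 : 0 < sin a := Real.sin_pos_of_pos_of_lt_pi ha0 (by linarith)
  have hsb0 : 0 < sin b := Real.sin_pos_of_pos_of_lt_pi hb0 (by linarith)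
  have hcs : 0 < cos a - sin a := by nlinarith
  have hbsq : b ^ 2 ≤ 4 * a ^ 2 := by nlinarith
  have hcube : b ^ 3 ≤ 4 * a ^ 2 * b :=
    by nlinarith [mul_nonneg hb0.le (by nlinarith : (0:ℝ) ≤ 4 * a ^ 2 - b ^ 2)]
  have h2 : 0 ≤ 6 - π - 3 / 2 * (π * a) := by nlinarith
  have h3 : a * b * (1 + 3 / 2 * a) ≤ 6 / π * (a * b) := by
    rw [show (6:ℝ) / π * (a * b) = 6 * (a * b) / π by ring, le_div_iff₀ hpi]
    nlinarith [mul_pos ha0 hb0]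
  have h5 : a * b + 3 / 2 * (a ^ 2 * b) ≤ b - a := by
    rw [hba]
    calc a * b + 3 / 2 * (a ^ 2 * b) = a * b * (1 + 3 / 2 * a) := by ring
      _ ≤ 6 / π * (a * b) := h3
  have harith : a + a * b ≤ (b - b ^ 3 / 4) * (1 - a ^ 2 / 2) := by
    nlinarith [h5, hcube, mul_nonneg (sq_nonneg a) (pow_pos hb0 3).le]
  have key : sin a / (cos a - sin a) < sin b := by
    rw [div_lt_iff₀ hcs, show sin b * (cos a - sin a) = sin b * cos a - sin b * sin a by ring]
    have h1 : sin b * sin a < b * a := mul_lt_mul' hsb.le hsa hsa0.le hb0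
    have h4 : (b - b ^ 3 / 4) * (1 - a ^ 2 / 2) ≤ sin b * cos a :=
      mul_le_mul hsb'.le hca (by nlinarith) hsb0.le
    linarith [harith]
  have h6 : (2:ℝ) * sin a / (cos a - sin a) = 2 * (sin a / (cos a - sin a)) := by ring
  rw [h6]
  linarith

theorem ub_4kplus8_lt_lb_4kplus2 (k : ℕ) (hk : 1 ≤ k) :
    1 + 2 * sin (π / (4 * (k : ℝ) + 8)) /
        (cos (π / (4 * (k : ℝ) + 8)) - sin (π / (4 * (k : ℝ) + 8))) <
      1 + 2 * sin (π / (4 * (k : ℝ) + 2)) := by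
  have hK : (1:ℝ) ≤ (k:ℝ) := by exact_mod_cast hk
  have hpi : (0:ℝ) < π := Real.pi_pos
  have hd8 : (0:ℝ) < 4*(k:ℝ)+8 := by linarith
  have hd2 : (0:ℝ) < 4*(k:ℝ)+2 := by linarith
  apply ub_aux
  · exact div_pos hpi hd8
  · exact div_pos hpi hd2
  · exact div_le_div_of_nonneg_left hpi.le (by norm_num) (by linarith)
  · have h6 : π / (4*(k:ℝ)+2) ≤ π / 6 :=
      div_le_div_of_nonneg_left hpi.le (by norm_num) (by linarith)
    have : π < 6 := by linarith [Real.pi_lt_d2]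
    linarith
  · exact div_le_div_of_nonneg_left hpi.le (by norm_num) (by linarith)
  · rw [mul_div_assoc', div_le_div_iff₀ hd2 hd8]
    nlinarith
  · field_simp
    ring
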